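/- Let F be a differentiable concave CDF on [0,1] with x ≤ F(x) ≤ Cx for a constant C > 1. Let Z = 1 - (C-1)·log(1/(1 - 1/C)) and let Ψ be the CDF on [0, 1/C] with density ξ(x) = Z⁻¹·(1 - Cx)/(1 - x). Then for every interval [a,b] ⊆ [0, 1/C], F(b) - F(a) ≥ Z·(Ψ(b) - Ψ(a)). -/

import Mathlib

open Set MeasureTheory intervalIntegral

/-- Minorization for concave Lipschitz distributions: for a differentiable concave CDF `F`
on `[0,1]` with `x ≤ F x ≤ C·x`, and `Ψ` the CDF on `[0,1/C]` with density
`ξ(x) = Z⁻¹ (1 - Cx)/(1 - x)` where `Z = 1 - (C-1) log(1/(1-1/C))`, we have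
`F(b) - F(a) ≥ Z (Ψ(b) - Ψ(a))` for every interval `[a,b] ⊆ [0,1/C]`. -/
theorem stmt_1 (F : ℝ → ℝ) (C : ℝ) (hC : 1 < C)
    (hdiff : DifferentiableOn ℝ F (Set.Icc (0:ℝ) 1))
    (hF0 : F 0 = 0) (hF1 : F 1 = 1)
    (hmono : MonotoneOn F (Set.Icc (0:ℝ) 1))
    (hconc : ConcaveOn ℝ (Set.Icc (0:ℝ) 1) F)
    (hbounds : ∀ x ∈ Set.Icc (0:ℝ) 1, x ≤ F x ∧ F x ≤ C * x)
    (Z : ℝ) (hZ : Z = 1 - (C - 1) * Real.log (1 / (1 - 1/C)))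
    (Ψ : ℝ → ℝ)
    (hΨ : ∀ t ∈ Set.Icc (0:ℝ) (1/C), Ψ t = ∫ x in (0:ℝ)..t, Z⁻¹ * (1 - C*x) / (1 - x)) :
    ∀ a b : ℝ, 0 ≤ a → a ≤ b → b ≤ 1/C → Z * (Ψ b - Ψ a) ≤ F b - F a := by
  intro a b ha hab hb
  have hC0 : (0:ℝ) < C := by linarith
  have hCinv1 : (1:ℝ)/C < 1 := by
    rw [div_lt_one hC0]; exact hC
  have hb1 : b < 1 := lt_of_le_of_lt hb hCinv1
  have ha0 : (0:ℝ) ≤ a := ha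
  -- Z > 0
  have h1C : (0:ℝ) < 1 - 1/C := by linarith
  have hxpos : (0:ℝ) < 1/(1 - 1/C) := by positivity
  have hC1ne : C - 1 ≠ 0 := by intro h; linarith
  have hxne : 1/(1 - 1/C) ≠ 1 := by
    have h1 : (0:ℝ) < 1/C := by positivity
    exact ne_of_gt (one_lt_one_div h1C (by linarith))
  have hlog := Real.log_lt_sub_one_of_pos hxpos hxne
  have hx1 : 1/(1 - 1/C) - 1 = 1/(C-1) := by
    field_simp [hC1ne, ne_of_gt hC0, ne_of_gt h1C]
    ring
  rw [hx1] at hlog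
  have hZpos : 0 < Z := by
    rw [hZ]
    have hC1 : (0:ℝ) < C - 1 := by linarith
    have := mul_lt_mul_of_pos_left hlog hC1
    rw [mul_one_div, div_self (ne_of_gt hC1)] at this
    linarith
  -- integrability of density
  have hgcont : ContinuousOn (fun x => Z⁻¹ * (1 - C*x) / (1 - x)) (Set.Icc (0:ℝ) b) := by
    apply ContinuousOn.div
    · fun_prop
    · fun_prop
    · intro x hx
      have : x < 1 := lt_of_le_of_lt hx.2 hb1
      intro h; linarith [sub_eq_zero.mp h]
  have hint1 : IntervalIntegrable (fun x => Z⁻¹ * (1 - C*x) / (1 - x)) volume 0 a := by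
    apply ContinuousOn.intervalIntegrable
    rw [Set.uIcc_of_le ha]
    exact hgcont.mono (Set.Icc_subset_Icc le_rfl hab)
  have hint2 : IntervalIntegrable (fun x => Z⁻¹ * (1 - C*x) / (1 - x)) volume a b := by
    apply ContinuousOn.intervalIntegrable
    rw [Set.uIcc_of_le hab]
    exact hgcont.mono (Set.Icc_subset_Icc ha le_rfl)
  have hΨd : Ψ b - Ψ a = ∫ x in a..b, Z⁻¹ * (1 - C*x) / (1 - x) := by
    rw [hΨ a ⟨ha, hab.trans hb⟩, hΨ b ⟨ha.trans hab, hb⟩,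
      ← intervalIntegral.integral_add_adjacent_intervals hint1 hint2]
    ring
  -- rewrite LHS as plain integral of (1-Cx)/(1-x)
  have hLHS : Z * (Ψ b - Ψ a) = ∫ x in a..b, (1 - C*x) / (1 - x) := by
    rw [hΨd, ← intervalIntegral.integral_const_mul]
    congr 1 with x
    rw [← mul_div_assoc, ← mul_assoc, mul_inv_cancel₀ (ne_of_gt hZpos), one_mul]
  -- integrability of g₂
  have hg2int : IntervalIntegrable (fun x => (1 - C*x) / (1 - x)) volume a b := by
    apply ContinuousOn.intervalIntegrable
    rw [Set.uIcc_of_le hab]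
    apply ContinuousOn.div
    · fun_prop
    · fun_prop
    · intro x hx
      have : x < 1 := lt_of_le_of_lt hx.2 hb1
      intro h; linarith [sub_eq_zero.mp h]
  -- pointwise bounds on deriv F on Ioo a b
  have hmem : ∀ x ∈ Set.Ioo a b, x ∈ Set.Icc (0:ℝ) 1 :=
    fun x hx => ⟨ha.trans hx.1.le, (hx.2.trans hb1).le⟩
  have hdA : ∀ x ∈ Set.Ioo a b, DifferentiableAt ℝ F x := by
    intro x hx
    exact hdiff.differentiableAt (Icc_mem_nhds (lt_of_le_of_lt ha hx.1) (hx.2.trans hb1))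
  have hkey : ∀ x ∈ Set.Ioo a b, (1 - C*x) / (1 - x) ≤ deriv F x ∧ 0 ≤ deriv F x ∧ deriv F x ≤ C := by
    intro x hx
    have hx0 : 0 < x := lt_of_le_of_lt ha hx.1
    have hx1' : x < 1 := hx.2.trans hb1
    have hxI : x ∈ Set.Icc (0:ℝ) 1 := ⟨hx0.le, hx1'.le⟩
    have h1I : (1:ℝ) ∈ Set.Icc (0:ℝ) 1 := ⟨zero_le_one, le_rfl⟩
    have h0I : (0:ℝ) ∈ Set.Icc (0:ℝ) 1 := ⟨le_rfl, zero_le_one⟩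
    have hFx := hbounds x hxI
    have hslope1 := hconc.slope_le_deriv hxI h1I hx1' (hdA x hx)
    rw [slope_def_field, hF1] at hslope1
    have hslope0 := hconc.deriv_le_slope h0I hxI hx0 (hdA x hx)
    rw [slope_def_field, hF0, sub_zero, sub_zero] at hslope0
    have hFx1 : F x ≤ 1 := hF1 ▸ hmono hxI h1I hx1'.le
    constructor
    · refine le_trans ?_ hslope1
      apply div_le_div_of_nonneg_right _ (by linarith)
      · linarith [hFx.2]
    constructor
    · refine le_trans ?_ hslope1
      apply div_nonneg (by linarith) (by linarith)
    · refine hslope0.trans ?_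
      rw [div_le_iff₀ hx0]
      linarith [hFx.2]
  -- integrability of deriv F
  have hderint : IntervalIntegrable (deriv F) volume a b := by
    rw [intervalIntegrable_iff_integrableOn_Ioo_of_le hab]
    apply Integrable.mono' (integrable_const C)
      (measurable_deriv F).aestronglyMeasurable.restrict
    filter_upwards [ae_restrict_mem measurableSet_Ioo] with x hx
    have := hkey x hx
    rw [Real.norm_eq_abs, abs_le]
    exact ⟨by linarith [this.2.1, hC0], this.2.2⟩
  -- FTC
  have hFTC : ∫ x in a..b, deriv F x = F b - F a := by
    apply intervalIntegral.integral_eq_sub_of_hasDerivAt_of_le hab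
    · exact (hdiff.continuousOn).mono (fun x hx => ⟨ha.trans hx.1, hx.2.trans hb1.le⟩)
    · intro x hx
      exact (hdA x hx).hasDerivAt
    · exact hderint
  -- comparison
  have hnull : volume ({a, b} : Set ℝ) = 0 := (Set.toFinite _).measure_zero volume
  have hae : (fun x => (1 - C*x) / (1 - x)) ≤ᵐ[volume.restrict (Set.Icc a b)] deriv F := by
    have h2 : ∀ᵐ x ∂volume.restrict (Set.Icc a b), x ∉ ({a, b} : Set ℝ) := by
      apply ae_restrict_of_ae
      have hs : {x : ℝ | ¬ x ∉ ({a, b} : Set ℝ)} = {a, b} := by ext x; simp; tauto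
      rw [ae_iff, hs]
      exact hnull
    filter_upwards [ae_restrict_mem measurableSet_Icc, h2] with x hx hx2
    simp only [Set.mem_insert_iff, Set.mem_singleton_iff] at hx2
    push_neg at hx2
    exact (hkey x ⟨lt_of_le_of_ne hx.1 (Ne.symm hx2.1), lt_of_le_of_ne hx.2 hx2.2⟩).1
  calc Z * (Ψ b - Ψ a) = ∫ x in a..b, (1 - C*x) / (1 - x) := hLHS
    _ ≤ ∫ x in a..b, deriv F x := intervalIntegral.integral_mono_ae_restrict hab hg2int hderint hae
    _ = F b - F a := hFTC
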